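/- If the ground metric D on Ω₁ × Ω₂ is additive, i.e. D((i₁,i₂),(j₁,j₂)) = D₁(i₁,j₁) + D₂(i₂,j₂), and p = p₁ ⊗ p₂ and q = q₁ ⊗ q₂ are product probability distributions on the finite set Ω₁ × Ω₂, then EMD(p, q) = EMD(p₁, q₁) + EMD(p₂, q₂), where each EMD is taken with respect to the corresponding ground metric. -/

import Mathlib

open scoped BigOperators

/-- A probability distribution on a finite set. -/
def IsProb {Ω : Type*} [Fintype Ω] (p : Ω → ℝ) : Prop :=
  (∀ i, 0 ≤ p i) ∧ ∑ i, p i = 1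

/-- A flow from `p` to `q`: nonnegative, with row marginals `p` and column marginals `q`. -/
def IsFlow {Ω : Type*} [Fintype Ω] (p q : Ω → ℝ) (f : Ω → Ω → ℝ) : Prop :=
  (∀ i j, 0 ≤ f i j) ∧ (∀ i, ∑ j, f i j = p i) ∧ (∀ j, ∑ i, f i j = q j)

/-- The earth mover's distance with ground distance `D`. -/
noncomputable def EMD {Ω : Type*} [Fintype Ω] (D : Ω → Ω → ℝ) (p q : Ω → ℝ) : ℝ :=
  sInf {c : ℝ | ∃ f : Ω → Ω → ℝ, IsFlow p q f ∧ c = ∑ i, ∑ j, f i j * D i j}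

/-- `D` is a metric. -/
def IsMetric {Ω : Type*} (D : Ω → Ω → ℝ) : Prop :=
  (∀ x y, 0 ≤ D x y) ∧ (∀ x y, D x y = 0 ↔ x = y) ∧ (∀ x y, D x y = D y x) ∧
    (∀ x y z, D x z ≤ D x y + D y z)

section Aux

variable {Ω : Type*} [Fintype Ω]

/-- The set of costs of flows. -/
def FlowCosts (D : Ω → Ω → ℝ) (p q : Ω → ℝ) : Set ℝ :=
  {c : ℝ | ∃ f : Ω → Ω → ℝ, IsFlow p q f ∧ c = ∑ i, ∑ j, f i j * D i j}

lemma EMD_eq (D : Ω → Ω → ℝ) (p q : Ω → ℝ) : EMD D p q = sInf (FlowCosts D p q) := rfl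

lemma prod_isFlow {p q : Ω → ℝ} (hp : IsProb p) (hq : IsProb q) :
    IsFlow p q (fun i j => p i * q j) := by
  refine ⟨fun i j => mul_nonneg (hp.1 i) (hq.1 j), fun i => ?_, fun j => ?_⟩
  · rw [← Finset.mul_sum, hq.2, mul_one]
  · rw [← Finset.sum_mul, hp.2, one_mul]

lemma flowCosts_nonempty {p q : Ω → ℝ} (hp : IsProb p) (hq : IsProb q) (D : Ω → Ω → ℝ) :
    (FlowCosts D p q).Nonempty :=
  ⟨_, fun i j => p i * q j, prod_isFlow hp hq, rfl⟩

lemma flowCosts_nonneg {p q : Ω → ℝ} (D : Ω → Ω → ℝ) (hD : ∀ x y, 0 ≤ D x y)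
    {c : ℝ} (hc : c ∈ FlowCosts D p q) : 0 ≤ c := by
  obtain ⟨f, hf, rfl⟩ := hc
  exact Finset.sum_nonneg fun i _ => Finset.sum_nonneg fun j _ =>
    mul_nonneg (hf.1 i j) (hD i j)

lemma flowCosts_bddBelow {p q : Ω → ℝ} (D : Ω → Ω → ℝ) (hD : ∀ x y, 0 ≤ D x y) :
    BddBelow (FlowCosts D p q) :=
  ⟨0, fun _ hc => flowCosts_nonneg D hD hc⟩

end Aux

theorem emd_product_additive
    {Ω₁ Ω₂ : Type*} [Fintype Ω₁] [Fintype Ω₂]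
    (D₁ : Ω₁ → Ω₁ → ℝ) (D₂ : Ω₂ → Ω₂ → ℝ)
    (hD₁ : IsMetric D₁) (hD₂ : IsMetric D₂)
    (p₁ q₁ : Ω₁ → ℝ) (p₂ q₂ : Ω₂ → ℝ)
    (hp₁ : IsProb p₁) (hq₁ : IsProb q₁) (hp₂ : IsProb p₂) (hq₂ : IsProb q₂) :
    EMD (fun a b : Ω₁ × Ω₂ => D₁ a.1 b.1 + D₂ a.2 b.2)
        (fun a : Ω₁ × Ω₂ => p₁ a.1 * p₂ a.2)
        (fun a : Ω₁ × Ω₂ => q₁ a.1 * q₂ a.2)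
      = EMD D₁ p₁ q₁ + EMD D₂ p₂ q₂ := by
  set D : Ω₁ × Ω₂ → Ω₁ × Ω₂ → ℝ := fun a b => D₁ a.1 b.1 + D₂ a.2 b.2 with hD
  set p : Ω₁ × Ω₂ → ℝ := fun a => p₁ a.1 * p₂ a.2 with hp
  set q : Ω₁ × Ω₂ → ℝ := fun a => q₁ a.1 * q₂ a.2 with hq
  have hpP : IsProb p := by
    refine ⟨fun a => mul_nonneg (hp₁.1 a.1) (hp₂.1 a.2), ?_⟩
    rw [hp, Fintype.sum_prod_type]
    simp_rw [← Finset.mul_sum, hp₂.2, mul_one]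
    exact hp₁.2
  have hqP : IsProb q := by
    refine ⟨fun a => mul_nonneg (hq₁.1 a.1) (hq₂.1 a.2), ?_⟩
    rw [hq, Fintype.sum_prod_type]
    simp_rw [← Finset.mul_sum, hq₂.2, mul_one]
    exact hq₁.2
  have hDnn : ∀ x y : Ω₁ × Ω₂, 0 ≤ D x y := fun x y => add_nonneg (hD₁.1 _ _) (hD₂.1 _ _)
  have hne : (FlowCosts D p q).Nonempty := flowCosts_nonempty hpP hqP D
  have hbdd : BddBelow (FlowCosts D p q) := flowCosts_bddBelow D hDnn
  have hne₁ : (FlowCosts D₁ p₁ q₁).Nonempty := flowCosts_nonempty hp₁ hq₁ D₁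
  have hne₂ : (FlowCosts D₂ p₂ q₂).Nonempty := flowCosts_nonempty hp₂ hq₂ D₂
  have hbdd₁ : BddBelow (FlowCosts D₁ p₁ q₁) := flowCosts_bddBelow D₁ hD₁.1
  have hbdd₂ : BddBelow (FlowCosts D₂ p₂ q₂) := flowCosts_bddBelow D₂ hD₂.1
  rw [EMD_eq, EMD_eq, EMD_eq]
  apply le_antisymm
  · -- sInf S ≤ sInf S₁ + sInf S₂
    rw [← sub_le_iff_le_add']
    refine le_csInf hne₂ fun c₂ hc₂ => ?_
    rw [sub_le_comm]
    refine le_csInf hne₁ fun c₁ hc₁ => ?_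
    rw [sub_le_iff_le_add]
    obtain ⟨f₁, hf₁, rfl⟩ := hc₁
    obtain ⟨f₂, hf₂, rfl⟩ := hc₂
    have hsum₁ : ∑ i, ∑ j, f₁ i j = 1 := by
      simp_rw [hf₁.2.1]; exact hp₁.2
    have hsum₂ : ∑ i, ∑ j, f₂ i j = 1 := by
      simp_rw [hf₂.2.1]; exact hp₂.2
    refine csInf_le hbdd ⟨fun a b => f₁ a.1 b.1 * f₂ a.2 b.2, ?_, ?_⟩
    · refine ⟨fun a b => mul_nonneg (hf₁.1 _ _) (hf₂.1 _ _), fun a => ?_, fun b => ?_⟩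
      · rw [Fintype.sum_prod_type]
        simp_rw [← Finset.mul_sum, hf₂.2.1, ← Finset.sum_mul, hf₁.2.1]
        rfl
      · rw [Fintype.sum_prod_type]
        simp_rw [← Finset.mul_sum, hf₂.2.2, ← Finset.sum_mul, hf₁.2.2]
        rfl
    · simp only [hD]
      rw [Fintype.sum_prod_type]
      simp_rw [Fintype.sum_prod_type]
      have key : ∀ i₁ i₂, ∑ j₁, ∑ j₂, f₁ i₁ j₁ * f₂ i₂ j₂ * (D₁ i₁ j₁ + D₂ i₂ j₂)
          = (∑ j₁, f₁ i₁ j₁ * D₁ i₁ j₁) * (∑ j₂, f₂ i₂ j₂)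
            + (∑ j₁, f₁ i₁ j₁) * (∑ j₂, f₂ i₂ j₂ * D₂ i₂ j₂) := by
        intro i₁ i₂
        rw [Finset.sum_mul_sum, Finset.sum_mul_sum, ← Finset.sum_add_distrib]
        refine Finset.sum_congr rfl fun j₁ _ => ?_
        rw [← Finset.sum_add_distrib]
        exact Finset.sum_congr rfl fun j₂ _ => by ring
      simp_rw [key, Finset.sum_add_distrib, ← Finset.sum_mul_sum, hsum₁, hsum₂, mul_one, one_mul]
  · -- sInf S₁ + sInf S₂ ≤ sInf S
    refine le_csInf hne fun c hc => ?_
    obtain ⟨f, hf, rfl⟩ := hc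
    set g₁ : Ω₁ → Ω₁ → ℝ := fun i j => ∑ i₂, ∑ j₂, f (i, i₂) (j, j₂) with hg₁
    set g₂ : Ω₂ → Ω₂ → ℝ := fun i j => ∑ i₁, ∑ j₁, f (i₁, i) (j₁, j) with hg₂
    have hg₁f : IsFlow p₁ q₁ g₁ := by
      refine ⟨fun i j => Finset.sum_nonneg fun _ _ => Finset.sum_nonneg fun _ _ => hf.1 _ _,
        fun i => ?_, fun j => ?_⟩
      · rw [hg₁]
        calc ∑ j, ∑ i₂, ∑ j₂, f (i, i₂) (j, j₂)
            = ∑ i₂, ∑ j, ∑ j₂, f (i, i₂) (j, j₂) := Finset.sum_comm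
          _ = ∑ i₂, p (i, i₂) := by
              refine Finset.sum_congr rfl fun i₂ _ => ?_
              rw [← hf.2.1 (i, i₂), Fintype.sum_prod_type]
          _ = p₁ i := by
              simp only [hp]
              rw [← Finset.mul_sum, hp₂.2, mul_one]
      · rw [hg₁]
        calc ∑ i, ∑ i₂, ∑ j₂, f (i, i₂) (j, j₂)
            = ∑ i, ∑ j₂, ∑ i₂, f (i, i₂) (j, j₂) :=
              Finset.sum_congr rfl fun _ _ => Finset.sum_comm
          _ = ∑ j₂, ∑ i, ∑ i₂, f (i, i₂) (j, j₂) := Finset.sum_comm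
          _ = ∑ j₂, q (j, j₂) := by
              refine Finset.sum_congr rfl fun j₂ _ => ?_
              rw [← hf.2.2 (j, j₂), Fintype.sum_prod_type]
          _ = q₁ j := by
              simp only [hq]
              rw [← Finset.mul_sum, hq₂.2, mul_one]
    have hg₂f : IsFlow p₂ q₂ g₂ := by
      refine ⟨fun i j => Finset.sum_nonneg fun _ _ => Finset.sum_nonneg fun _ _ => hf.1 _ _,
        fun i => ?_, fun j => ?_⟩
      · rw [hg₂]
        calc ∑ j, ∑ i₁, ∑ j₁, f (i₁, i) (j₁, j)
            = ∑ i₁, ∑ j, ∑ j₁, f (i₁, i) (j₁, j) := Finset.sum_comm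
          _ = ∑ i₁, ∑ j₁, ∑ j, f (i₁, i) (j₁, j) :=
              Finset.sum_congr rfl fun _ _ => Finset.sum_comm
          _ = ∑ i₁, p (i₁, i) := by
              refine Finset.sum_congr rfl fun i₁ _ => ?_
              rw [← hf.2.1 (i₁, i), Fintype.sum_prod_type]
          _ = p₂ i := by
              simp only [hp]
              rw [← Finset.sum_mul, hp₁.2, one_mul]
      · rw [hg₂]
        calc ∑ i, ∑ i₁, ∑ j₁, f (i₁, i) (j₁, j)
            = ∑ i₁, ∑ i, ∑ j₁, f (i₁, i) (j₁, j) := Finset.sum_comm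
          _ = ∑ i₁, ∑ j₁, ∑ i, f (i₁, i) (j₁, j) :=
              Finset.sum_congr rfl fun _ _ => Finset.sum_comm
          _ = ∑ j₁, ∑ i₁, ∑ i, f (i₁, i) (j₁, j) := Finset.sum_comm
          _ = ∑ j₁, q (j₁, j) := by
              refine Finset.sum_congr rfl fun j₁ _ => ?_
              rw [← hf.2.2 (j₁, j), Fintype.sum_prod_type]
          _ = q₂ j := by
              simp only [hq]
              rw [← Finset.sum_mul, hq₁.2, one_mul]
    have hcost : ∑ a, ∑ b, f a b * D a b
        = (∑ i, ∑ j, g₁ i j * D₁ i j) + (∑ i, ∑ j, g₂ i j * D₂ i j) := by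
      have e1 : ∑ a, ∑ b, f a b * D₁ a.1 b.1 = ∑ i, ∑ j, g₁ i j * D₁ i j := by
        rw [Fintype.sum_prod_type]
        simp_rw [Fintype.sum_prod_type, hg₁, Finset.sum_mul]
        exact Finset.sum_congr rfl fun i₁ _ => Finset.sum_comm
      have e2 : ∑ a, ∑ b, f a b * D₂ a.2 b.2 = ∑ i, ∑ j, g₂ i j * D₂ i j := by
        rw [Fintype.sum_prod_type]
        simp_rw [Fintype.sum_prod_type, hg₂, Finset.sum_mul]
        calc ∑ i₁, ∑ i₂, ∑ j₁, ∑ j₂, f (i₁, i₂) (j₁, j₂) * D₂ i₂ j₂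
            = ∑ i₂, ∑ i₁, ∑ j₁, ∑ j₂, f (i₁, i₂) (j₁, j₂) * D₂ i₂ j₂ := Finset.sum_comm
          _ = ∑ i₂, ∑ i₁, ∑ j₂, ∑ j₁, f (i₁, i₂) (j₁, j₂) * D₂ i₂ j₂ :=
              Finset.sum_congr rfl fun _ _ => Finset.sum_congr rfl fun _ _ => Finset.sum_comm
          _ = ∑ i₂, ∑ j₂, ∑ i₁, ∑ j₁, f (i₁, i₂) (j₁, j₂) * D₂ i₂ j₂ :=
              Finset.sum_congr rfl fun _ _ => Finset.sum_comm
      calc ∑ a, ∑ b, f a b * D a b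
          = ∑ a, ∑ b, (f a b * D₁ a.1 b.1 + f a b * D₂ a.2 b.2) := by
            simp only [hD]; exact Finset.sum_congr rfl fun a _ =>
              Finset.sum_congr rfl fun b _ => by ring
        _ = (∑ a, ∑ b, f a b * D₁ a.1 b.1) + ∑ a, ∑ b, f a b * D₂ a.2 b.2 := by
            simp_rw [Finset.sum_add_distrib]
        _ = _ := by rw [e1, e2]
    rw [hcost]
    exact add_le_add (csInf_le hbdd₁ ⟨g₁, hg₁f, rfl⟩) (csInf_le hbdd₂ ⟨g₂, hg₂f, rfl⟩)
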